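/- Let B be a definite quaternion algebra over Q (ramified at ∞) and let x, u be elements of an order R in B. Then the quantity (Disc(x)·Disc(u) − (Tr(x)·Tr(u) − 2·Tr(x u^∨))^2)/4 is a non-negative integer, where Disc(v) := Tr(v)^2 − 4·Nrd(v). -/

import Mathlib

open Quaternion

/-- Let `B = ℍ[ℚ, c₁, c₂]` be a definite quaternion algebra over `ℚ` (the reduced norm
`v ↦ v * star v` is a non-negative rational scalar for every `v`), `R` an order in `B`
(every element of `R` has integral reduced trace and norm), and `x, u ∈ R` with reduced
traces `tx, tu`, reduced norms `nx, nu` and `Tr(x u^∨) = txu`.  Then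
`(Disc(x)·Disc(u) − (Tr(x)Tr(u) − 2Tr(xu^∨))²)/4` is a non-negative integer. -/
theorem stmt8 (c₁ c₂ : ℚ)
    (hdef : ∀ v : ℍ[ℚ, c₁, c₂], ∃ q : ℚ, 0 ≤ q ∧ v * star v = (q : ℍ[ℚ, c₁, c₂]))
    (R : Subring ℍ[ℚ, c₁, c₂])
    (hR : ∀ v ∈ R, ∃ t n : ℤ,
      ((t : ℚ) : ℍ[ℚ, c₁, c₂]) = v + star v ∧ ((n : ℚ) : ℍ[ℚ, c₁, c₂]) = v * star v)
    (x u : ℍ[ℚ, c₁, c₂]) (hx : x ∈ R) (hu : u ∈ R)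
    (tx nx tu nu txu : ℤ)
    (htx : ((tx : ℚ) : ℍ[ℚ, c₁, c₂]) = x + star x)
    (hnx : ((nx : ℚ) : ℍ[ℚ, c₁, c₂]) = x * star x)
    (htu : ((tu : ℚ) : ℍ[ℚ, c₁, c₂]) = u + star u)
    (hnu : ((nu : ℚ) : ℍ[ℚ, c₁, c₂]) = u * star u)
    (htxu : ((txu : ℚ) : ℍ[ℚ, c₁, c₂]) = x * star u + u * star x) :
    ∃ m : ℤ, 0 ≤ m ∧
      4 * m = (tx ^ 2 - 4 * nx) * (tu ^ 2 - 4 * nu) - (tx * tu - 2 * txu) ^ 2 := by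
  have key : ∀ (a : ℍ[ℚ, c₁, c₂]) (r : ℚ), ((r : ℚ) : ℍ[ℚ, c₁, c₂]) = a → r = a.re :=
    fun a r h => congrArg QuaternionAlgebra.re h
  set v : ℍ[ℚ, c₁, c₂] := ((tu : ℚ) : ℍ[ℚ, c₁, c₂]) * x + ((tx : ℚ) : ℍ[ℚ, c₁, c₂]) * u
      - (x * u + x * u) with hvdef
  have hvR : v ∈ R := by
    apply sub_mem (add_mem (mul_mem ?_ hx) (mul_mem ?_ hu))
      (add_mem (mul_mem hx hu) (mul_mem hx hu))
    · rw [show ((tu : ℚ) : ℍ[ℚ, c₁, c₂]) = ((tu : ℤ) : ℍ[ℚ, c₁, c₂]) by push_cast; ring]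
      exact intCast_mem R tu
    · rw [show ((tx : ℚ) : ℍ[ℚ, c₁, c₂]) = ((tx : ℤ) : ℍ[ℚ, c₁, c₂]) by push_cast; ring]
      exact intCast_mem R tx
  obtain ⟨t, n, ht, hn⟩ := hR v hvR
  obtain ⟨q, hq0, hqw⟩ := hdef (v - ((txu : ℚ) : ℍ[ℚ, c₁, c₂]))
  have etx := key _ _ htx
  have enx := key _ _ hnx
  have etu := key _ _ htu
  have enu := key _ _ hnu
  have etxu := key _ _ htxu
  have en := key _ _ hn
  have eq := key _ _ hqw.symm
  simp only [hvdef, QuaternionAlgebra.re_add, QuaternionAlgebra.re_sub,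
    QuaternionAlgebra.re_mul, QuaternionAlgebra.imI_add, QuaternionAlgebra.imI_sub,
    QuaternionAlgebra.imI_mul, QuaternionAlgebra.imJ_add, QuaternionAlgebra.imJ_sub,
    QuaternionAlgebra.imJ_mul, QuaternionAlgebra.imK_add, QuaternionAlgebra.imK_sub,
    QuaternionAlgebra.imK_mul, QuaternionAlgebra.re_star, QuaternionAlgebra.imI_star,
    QuaternionAlgebra.imJ_star, QuaternionAlgebra.imK_star, QuaternionAlgebra.re_coe,
    QuaternionAlgebra.imI_coe, QuaternionAlgebra.imJ_coe, QuaternionAlgebra.imK_coe]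
    at etx enx etu enu etxu en eq
  rw [etx, etu] at en eq
  rw [etxu] at eq
  refine ⟨n - txu ^ 2, ?_, ?_⟩
  · have hm : ((n - txu ^ 2 : ℤ) : ℚ) = q := by
      push_cast
      rw [en, etxu, eq]
      ring
    have := hm ▸ hq0
    exact_mod_cast this
  · have h4 : (4 * (n - txu ^ 2 : ℤ) : ℚ) =
        ((tx : ℚ) ^ 2 - 4 * nx) * ((tu : ℚ) ^ 2 - 4 * nu) - ((tx : ℚ) * tu - 2 * txu) ^ 2 := by
      push_cast
      rw [en, etxu, enx, enu, etx, etu]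
      ring
    exact_mod_cast h4
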